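/- For every s with Re(s) > 0, the function v_out(y) = y^(-1/2) e^(s/y) K₂(s/y), where K₂ is the modified Bessel function of the second kind, solves the equation 2s v' + (y² v')' - (15/4) v = 0 on (0, ∞). -/

import Mathlib

open MeasureTheory

/-- The modified Bessel function of the second kind of order 2, defined for
`Re z > 0` by its standard integral representation
`K₂(z) = ∫₀^∞ e^(-z cosh t) cosh(2t) dt`. -/
noncomputable def besselK2 (z : ℂ) : ℂ :=
  ∫ t in Set.Ioi (0:ℝ), Complex.exp (-z * Real.cosh t) * (Real.cosh (2 * t) : ℂ)

open Set Filter
open scoped Topology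

namespace OG


lemma cosh_quad_le (t : ℝ) : 1 + t^2/2 ≤ Real.cosh t := by
  have h1 : Real.cosh t = 2 * Real.sinh (t/2)^2 + 1 := by
    rw [show t = 2*(t/2) by ring, Real.cosh_two_mul, Real.cosh_sq]; ring
  rcases le_total 0 t with ht | ht
  · have := Real.self_le_sinh_iff.2 (by linarith : (0:ℝ) ≤ t/2)
    nlinarith
  · have h3 := Real.self_le_sinh_iff.2 (by linarith : (0:ℝ) ≤ -(t/2))
    have h4 : Real.sinh (-(t/2)) = - Real.sinh (t/2) := Real.sinh_neg _
    nlinarith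

lemma cosh_le_exp {t : ℝ} (ht : 0 ≤ t) : Real.cosh t ≤ Real.exp t := by
  rw [Real.cosh_eq]
  have := Real.exp_le_exp.2 (by linarith : -t ≤ t)
  linarith

lemma exp_master (c k : ℝ) (hc : 0 < c) (t : ℝ) :
    Real.exp (k*t - c * Real.cosh t) ≤ Real.exp (k^2/c) * Real.exp (-(c/4) * t^2) := by
  rw [← Real.exp_add]
  apply Real.exp_le_exp.2
  have h1 := cosh_quad_le t
  have h2 : c * (k * t) ≤ (c/2)^2 * t^2 + k^2 := by nlinarith [sq_nonneg ((c/2)*t - k)]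
  have hck : k^2/c*c = k^2 := div_mul_cancel₀ _ hc.ne'
  nlinarith [mul_le_mul_of_nonneg_left h1 (mul_pos hc hc).le]

noncomputable def ker (z : ℂ) (n : ℕ) (t : ℝ) : ℂ :=
  Complex.exp (-z * Real.cosh t) * ((Real.cosh t : ℂ)^n * (Real.cosh (2*t) : ℂ))

lemma norm_ker (z : ℂ) (n : ℕ) (t : ℝ) :
    ‖ker z n t‖ = Real.exp (-z.re * Real.cosh t) * ((Real.cosh t)^n * Real.cosh (2*t)) := by
  have h1 : (0:ℝ) < Real.cosh t := Real.cosh_pos t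
  have h2 : (0:ℝ) < Real.cosh (2*t) := Real.cosh_pos (2*t)
  rw [ker, norm_mul, norm_mul, norm_pow, Complex.norm_real, Complex.norm_real,
    Real.norm_eq_abs, Real.norm_eq_abs, abs_of_pos h1, abs_of_pos h2,
    Complex.norm_exp]
  congr 1
  simp [Complex.mul_re]

lemma ker_cont (z : ℂ) (n : ℕ) : Continuous (ker z n) := by
  unfold ker; fun_prop

lemma norm_ker_le (z : ℂ) (n : ℕ) (t : ℝ) (ht : 0 ≤ t) (c : ℝ) (hc : 0 < c)
    (hzc : c ≤ z.re) :
    ‖ker z n t‖ ≤ Real.exp (((n:ℝ)+2)^2/c) * Real.exp (-(c/4) * t^2) := by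
  rw [norm_ker]
  have h1 : (0:ℝ) < Real.cosh t := Real.cosh_pos t
  have hle : Real.exp (-z.re * Real.cosh t) * ((Real.cosh t)^n * Real.cosh (2*t))
      ≤ Real.exp ((((n:ℝ)+2))*t - c * Real.cosh t) := by
    have hcosh : Real.cosh t ≤ Real.exp t := cosh_le_exp ht
    have hcosh2 : Real.cosh (2*t) ≤ Real.exp (2*t) := cosh_le_exp (by linarith)
    have hpow : (Real.cosh t)^n ≤ Real.exp ((n:ℝ)*t) := by
      calc (Real.cosh t)^n ≤ (Real.exp t)^n := pow_le_pow_left₀ h1.le hcosh n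
        _ = Real.exp ((n:ℝ)*t) := by rw [← Real.exp_nat_mul]
    have he : Real.exp (-z.re * Real.cosh t) ≤ Real.exp (-c * Real.cosh t) := by
      apply Real.exp_le_exp.2; nlinarith
    calc Real.exp (-z.re * Real.cosh t) * ((Real.cosh t)^n * Real.cosh (2*t))
        ≤ Real.exp (-c * Real.cosh t) * (Real.exp ((n:ℝ)*t) * Real.exp (2*t)) := by
          apply mul_le_mul he (mul_le_mul hpow hcosh2 (Real.cosh_pos (2*t)).le (Real.exp_pos _).le)
            (by positivity) (Real.exp_pos _).le
      _ = Real.exp ((((n:ℝ)+2))*t - c * Real.cosh t) := by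
          rw [← Real.exp_add, ← Real.exp_add]; ring_nf
  exact hle.trans (exp_master c _ hc t)

lemma gauss_integrable (c C : ℝ) (hc : 0 < c) :
    IntegrableOn (fun t : ℝ => C * Real.exp (-(c/4) * t^2)) (Ioi 0) := by
  exact ((integrable_exp_neg_mul_sq (by linarith : (0:ℝ) < c/4)).const_mul C).integrableOn

lemma ker_integrableOn (z : ℂ) (hz : 0 < z.re) (n : ℕ) :
    IntegrableOn (ker z n) (Ioi 0) := by
  apply Integrable.mono' (gauss_integrable z.re (Real.exp (((n:ℝ)+2)^2/z.re)) hz)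
    ((ker_cont z n).aestronglyMeasurable.restrict)
  filter_upwards [ae_restrict_mem measurableSet_Ioi] with t ht
  exact norm_ker_le z n t (le_of_lt ht) z.re hz le_rfl

noncomputable def KI (n : ℕ) (z : ℂ) : ℂ := ∫ t in Ioi (0:ℝ), ker z n t

lemma hasDerivAt_ker (n : ℕ) (t : ℝ) (x : ℂ) :
    HasDerivAt (fun w => ker w n t) (-(ker x (n+1) t)) x := by
  have h : HasDerivAt (fun w : ℂ => Complex.exp (-w * (Real.cosh t : ℂ)))
      (Complex.exp (-x * (Real.cosh t : ℂ)) * (-1 * (Real.cosh t : ℂ))) x :=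
    ((hasDerivAt_id x).neg.mul_const ((Real.cosh t : ℂ))).cexp
  have h2 := h.mul_const ((Real.cosh t : ℂ)^n * (Real.cosh (2*t) : ℂ))
  refine h2.congr_deriv ?_
  unfold ker; ring

lemma hasDerivAt_KI (n : ℕ) (z : ℂ) (hz : 0 < z.re) :
    HasDerivAt (KI n) (-(KI (n+1) z)) z := by
  have hε : 0 < z.re/2 := by linarith
  have key := hasDerivAt_integral_of_dominated_loc_of_deriv_le (μ := volume.restrict (Ioi 0))
    (F := fun w t => ker w n t) (F' := fun w t => -(ker w (n+1) t))
    (x₀ := z)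
    (bound := fun t => Real.exp ((((n:ℝ)+1)+2)^2/(z.re/2)) * Real.exp (-((z.re/2)/4) * t^2))
    (s := Metric.ball z (z.re/2)) (Metric.ball_mem_nhds z hε)
    (Eventually.of_forall fun x => (ker_cont x n).aestronglyMeasurable.restrict)
    (ker_integrableOn z hz n)
    (((ker_cont z (n+1)).neg).aestronglyMeasurable.restrict)
    ?_ ((gauss_integrable (z.re/2) _ hε))
    (Eventually.of_forall fun t => fun x _ => hasDerivAt_ker n t x)
  · have : (∫ t in Ioi (0:ℝ), -(ker z (n+1) t)) = -(KI (n+1) z) := by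
      rw [integral_neg]; rfl
    exact key.2.congr_deriv this
  · filter_upwards [ae_restrict_mem measurableSet_Ioi] with t ht x hx
    rw [norm_neg]
    have hxre : z.re/2 ≤ x.re := by
      have h1 : |(x - z).re| ≤ ‖x - z‖ := Complex.abs_re_le_norm _
      have h2 : ‖x - z‖ < z.re/2 := by
        simpa [Complex.dist_eq] using (Metric.mem_ball.mp hx)
      have h3 := abs_le.mp (le_of_lt (lt_of_le_of_lt h1 h2))
      simp only [Complex.sub_re] at h3
      linarith [h3.1]
    have := norm_ker_le x (n+1) t (le_of_lt ht) (z.re/2) hε hxre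
    simpa using this

lemma abs_sinh_le_cosh (t : ℝ) : |Real.sinh t| ≤ Real.cosh t := by
  rw [Real.abs_sinh, ← Real.cosh_abs t, Real.sinh_eq, Real.cosh_eq]
  have := Real.exp_pos (-|t|)
  linarith

noncomputable def FF (z : ℂ) (t : ℝ) : ℂ :=
  Complex.exp (-z * Real.cosh t) *
    (-z * Real.sinh t * Real.cosh (2*t) - 2 * Real.sinh (2*t))

lemma hasDerivAt_FF (z : ℂ) (t : ℝ) :
    HasDerivAt (FF z)
      (z^2 * ker z 2 t - z * ker z 1 t - (z^2+4) * ker z 0 t) t := by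
  have hcosh : HasDerivAt (fun u:ℝ => (Real.cosh u : ℂ)) (Real.sinh t) t :=
    (Real.hasDerivAt_cosh t).ofReal_comp
  have hsinh : HasDerivAt (fun u:ℝ => (Real.sinh u : ℂ)) (Real.cosh t) t :=
    (Real.hasDerivAt_sinh t).ofReal_comp
  have hcosh2 : HasDerivAt (fun u:ℝ => (Real.cosh (2*u) : ℂ)) (2*Real.sinh (2*t)) t := by
    have := ((Real.hasDerivAt_cosh (2*t)).comp t ((hasDerivAt_id t).const_mul 2)).ofReal_comp
    simpa [mul_comm] using this
  have hsinh2 : HasDerivAt (fun u:ℝ => (Real.sinh (2*u) : ℂ)) (2*Real.cosh (2*t)) t := by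
    have := ((Real.hasDerivAt_sinh (2*t)).comp t ((hasDerivAt_id t).const_mul 2)).ofReal_comp
    simpa [mul_comm] using this
  have he : HasDerivAt (fun u:ℝ => Complex.exp (-z * Real.cosh u))
      (Complex.exp (-z * Real.cosh t) * (-z * Real.sinh t)) t := by
    exact (hcosh.const_mul (-z)).cexp
  have hg : HasDerivAt (fun u:ℝ =>
        (-z * Real.sinh u * Real.cosh (2*u) - 2 * Real.sinh (2*u) : ℂ))
      ((-z * Real.cosh t) * Real.cosh (2*t) + (-z * Real.sinh t) * (2*Real.sinh (2*t))
        - 2 * (2*Real.cosh (2*t))) t := by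
    exact (((hsinh.const_mul (-z)).mul hcosh2).sub (hsinh2.const_mul 2))
  have hF := he.mul hg
  refine hF.congr_deriv ?_
  symm
  have hs : (Real.sinh t : ℂ)^2 = (Real.cosh t : ℂ)^2 - 1 := by
    have := Real.sinh_sq t
    exact_mod_cast congrArg (fun r : ℝ => (r:ℂ)) this
  unfold ker
  linear_combination (-(Complex.exp (-z * Real.cosh t) * z^2 * ((Real.cosh (2*t) : ℝ) : ℂ))) * hs

lemma FF_tendsto (z : ℂ) (hz : 0 < z.re) : Tendsto (FF z) atTop (𝓝 0) := by
  apply squeeze_zero_norm' (a := fun t =>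
    (‖z‖ + 2) * (Real.exp (((1:ℝ)+2)^2/z.re) * Real.exp (-(z.re/4) * t^2)))
  · filter_upwards [eventually_ge_atTop (0:ℝ)] with t ht
    have h1 : (0:ℝ) < Real.cosh t := Real.cosh_pos t
    have h2 : (0:ℝ) < Real.cosh (2*t) := Real.cosh_pos (2*t)
    have hb : ‖FF z t‖ ≤ (‖z‖ + 2) * ‖ker z 1 t‖ := by
      rw [FF, norm_mul, norm_ker]
      have hn : ‖(-z * Real.sinh t * Real.cosh (2*t) - 2 * Real.sinh (2*t) : ℂ)‖
          ≤ (‖z‖ + 2) * (Real.cosh t * Real.cosh (2*t)) := by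
        have := norm_sub_le (-z * Real.sinh t * Real.cosh (2*t) : ℂ)
          (2 * Real.sinh (2*t) : ℂ)
        have e1 : ‖(-z * Real.sinh t * Real.cosh (2*t) : ℂ)‖
            = ‖z‖ * |Real.sinh t| * Real.cosh (2*t) := by
          rw [norm_mul, norm_mul, norm_neg, Complex.norm_real,
            Complex.norm_real, Real.norm_eq_abs, Real.norm_eq_abs, abs_of_pos h2]
        have e2 : ‖(2 * Real.sinh (2*t) : ℂ)‖ = 2 * |Real.sinh (2*t)| := by
          rw [norm_mul, Complex.norm_real, Real.norm_eq_abs, Complex.norm_ofNat]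
        have i1 : |Real.sinh t| ≤ Real.cosh t := abs_sinh_le_cosh t
        have i2 : |Real.sinh (2*t)| ≤ Real.cosh (2*t) := abs_sinh_le_cosh (2*t)
        have i3 : (1:ℝ) ≤ Real.cosh t := Real.one_le_cosh t
        have habs : (0:ℝ) ≤ ‖z‖ := (norm_nonneg z)
        calc ‖(-z * Real.sinh t * Real.cosh (2*t) - 2 * Real.sinh (2*t) : ℂ)‖
            ≤ ‖z‖ * |Real.sinh t| * Real.cosh (2*t) + 2 * |Real.sinh (2*t)| := by
              rw [← e1, ← e2]; exact this
          _ ≤ (‖z‖ + 2) * (Real.cosh t * Real.cosh (2*t)) := by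
              have j1 : ‖z‖ * |Real.sinh t| * Real.cosh (2*t)
                  ≤ ‖z‖ * (Real.cosh t * Real.cosh (2*t)) := by
                have := mul_le_mul_of_nonneg_right i1 h2.le
                nlinarith
              have j2 : 2 * |Real.sinh (2*t)| ≤ 2 * (Real.cosh t * Real.cosh (2*t)) := by
                nlinarith
              nlinarith
      have hexp : ‖Complex.exp (-z * Real.cosh t)‖ = Real.exp (-z.re * Real.cosh t) := by
        rw [Complex.norm_exp]
        congr 1; simp [Complex.mul_re]
      rw [hexp]
      calc Real.exp (-z.re * Real.cosh t) *
            ‖(-z * Real.sinh t * Real.cosh (2*t) - 2 * Real.sinh (2*t) : ℂ)‖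
          ≤ Real.exp (-z.re * Real.cosh t) * ((‖z‖ + 2) * (Real.cosh t * Real.cosh (2*t))) :=
            mul_le_mul_of_nonneg_left hn (Real.exp_pos _).le
        _ = (‖z‖ + 2) * (Real.exp (-z.re * Real.cosh t) * (Real.cosh t ^ 1 * Real.cosh (2*t))) := by ring
    refine hb.trans ?_
    have := norm_ker_le z 1 t ht z.re hz le_rfl
    have habs : (0:ℝ) ≤ ‖z‖ + 2 := by positivity
    exact mul_le_mul_of_nonneg_left (by simpa using this) habs
  · have h1 : Tendsto (fun t : ℝ => -(z.re/4) * t^2) atTop atBot := by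
      apply Tendsto.const_mul_atTop_of_neg (by linarith : -(z.re/4) < 0)
      exact tendsto_pow_atTop (two_ne_zero)
    have h2 : Tendsto (fun t : ℝ => Real.exp (-(z.re/4) * t^2)) atTop (𝓝 0) :=
      Real.tendsto_exp_atBot.comp h1
    have := (h2.const_mul (Real.exp (((1:ℝ)+2)^2/z.re))).const_mul (‖z‖ + 2)
    simpa using this

lemma bessel_ode (z : ℂ) (hz : 0 < z.re) :
    z^2 * KI 2 z - z * KI 1 z - (z^2+4) * KI 0 z = 0 := by
  have hint : IntegrableOn (fun t => z^2 * ker z 2 t - z * ker z 1 t - (z^2+4) * ker z 0 t)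
      (Ioi 0) := by
    exact (((ker_integrableOn z hz 2).const_mul (z^2)).sub
      ((ker_integrableOn z hz 1).const_mul z)).sub
      ((ker_integrableOn z hz 0).const_mul (z^2+4))
  have hFTC := integral_Ioi_of_hasDerivAt_of_tendsto' (a := 0)
    (fun t _ => hasDerivAt_FF z t) hint (FF_tendsto z hz)
  have hF0 : FF z 0 = 0 := by
    simp [FF]
  rw [hF0, sub_zero] at hFTC
  have h2 := (ker_integrableOn z hz 2).const_mul (z^2)
  have h1 := (ker_integrableOn z hz 1).const_mul z
  have h0 := (ker_integrableOn z hz 0).const_mul (z^2+4)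
  have i2 : ∫ t in Ioi (0:ℝ), z^2 * ker z 2 t = z^2 * KI 2 z := integral_const_mul _ _
  have i1 : ∫ t in Ioi (0:ℝ), z * ker z 1 t = z * KI 1 z := integral_const_mul _ _
  have i0 : ∫ t in Ioi (0:ℝ), (z^2+4) * ker z 0 t = (z^2+4) * KI 0 z := integral_const_mul _ _
  have key : z^2 * KI 2 z - z * KI 1 z - (z^2+4) * KI 0 z
      = ∫ t in Ioi (0:ℝ), (z^2 * ker z 2 t - z * ker z 1 t - (z^2+4) * ker z 0 t) := by
    have h21 : Integrable (fun x => z^2 * ker z 2 x - z * ker z 1 x)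
        (volume.restrict (Ioi 0)) := h2.sub h1
    rw [← i2, ← i1, ← i0, ← integral_sub h2 h1, ← integral_sub h21 h0]
  rw [key]
  exact hFTC

lemma besselK2_eq : besselK2 = KI 0 := by
  funext z; simp [besselK2, KI, ker]

noncomputable def P (y : ℝ) : ℂ := (y:ℂ) ^ (-(1:ℂ)/2)

noncomputable def Ef (s : ℂ) (y : ℝ) : ℂ :=
  P y * Complex.exp (s/(y:ℂ)) *
    ((-(1:ℂ)/(2*(y:ℂ)) - s/(y:ℂ)^2) * KI 0 (s/(y:ℂ)) + s/(y:ℂ)^2 * KI 1 (s/(y:ℂ)))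

noncomputable def G (s : ℂ) (y : ℝ) : ℂ :=
  P y * Complex.exp (s/(y:ℂ)) *
    ((-(y:ℂ)/2 - s) * KI 0 (s/(y:ℂ)) + s * KI 1 (s/(y:ℂ)))

noncomputable def DG (s : ℂ) (y : ℝ) : ℂ :=
  P y * Complex.exp (s/(y:ℂ)) *
    ((-(1:ℂ)/(2*(y:ℂ)) - s/(y:ℂ)^2) * ((-(y:ℂ)/2 - s) * KI 0 (s/(y:ℂ)) + s * KI 1 (s/(y:ℂ)))
      + ((-(1:ℂ)/2) * KI 0 (s/(y:ℂ)) + (-(y:ℂ)/2 - s) * (s/(y:ℂ)^2) * KI 1 (s/(y:ℂ))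
          + s^2/(y:ℂ)^2 * KI 2 (s/(y:ℂ))))

variable {s : ℂ} {y : ℝ}

lemma zre_pos (hs : 0 < s.re) (hy : 0 < y) : 0 < (s/(y:ℂ)).re := by
  rw [Complex.div_ofReal_re]; exact div_pos hs hy

lemma hasDerivAt_P (hy : 0 < y) : HasDerivAt P (-(P y)/(2*(y:ℂ))) y := by
  have hy0 : (y:ℂ) ≠ 0 := by exact_mod_cast ne_of_gt hy
  have h := (Complex.hasStrictDerivAt_cpow_const
    (x := (y:ℂ)) (c := -(1:ℂ)/2) (Or.inl (by simpa using hy))).hasDerivAt.comp_ofReal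
  have : HasDerivAt P (-(1:ℂ)/2 * (y:ℂ) ^ (-(1:ℂ)/2 - 1)) y := h
  convert this using 1
  rw [Complex.cpow_sub _ _ hy0, Complex.cpow_one]
  unfold P; field_simp

lemma hasDerivAt_Z (s : ℂ) (hy : 0 < y) :
    HasDerivAt (fun y' : ℝ => s/(y':ℂ)) (-(s/(y:ℂ)^2)) y := by
  have hy0 : (y:ℂ) ≠ 0 := by exact_mod_cast ne_of_gt hy
  have h : HasDerivAt (fun w : ℂ => s / w) (-(s/(y:ℂ)^2)) (y:ℂ) := by
    have := (hasDerivAt_inv hy0).const_mul s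
    refine this.congr_deriv ?_
    field_simp
  exact h.comp_ofReal

lemma hasDerivAt_vout (hs : 0 < s.re) (hy : 0 < y) :
    HasDerivAt (fun y' : ℝ => P y' * Complex.exp (s/(y':ℂ)) * KI 0 (s/(y':ℂ)))
      (Ef s y) y := by
  have hy0 : (y:ℂ) ≠ 0 := by exact_mod_cast ne_of_gt hy
  have hz := zre_pos hs hy
  have hZ := hasDerivAt_Z s hy
  have he : HasDerivAt (fun y' : ℝ => Complex.exp (s/(y':ℂ)))
      (Complex.exp (s/(y:ℂ)) * -(s/(y:ℂ)^2)) y := hZ.cexp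
  have hk : HasDerivAt (fun y' : ℝ => KI 0 (s/(y':ℂ)))
      (-(s/(y:ℂ)^2) • -(KI 1 (s/(y:ℂ)))) y := by
      have := (hasDerivAt_KI 0 _ hz).scomp y hZ; exact this
  have h := ((hasDerivAt_P hy).mul he).mul hk
  refine h.congr_deriv ?_
  unfold Ef
  simp only [smul_eq_mul, Pi.mul_apply]
  field_simp
  ring

lemma sq_Ef_eq (hu : 0 < y) : (y:ℂ)^2 * Ef s y = G s y := by
  have hy0 : (y:ℂ) ≠ 0 := by exact_mod_cast ne_of_gt hu
  unfold Ef G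
  field_simp

lemma hasDerivAt_G (hs : 0 < s.re) (hy : 0 < y) : HasDerivAt (G s) (DG s y) y := by
  have hy0 : (y:ℂ) ≠ 0 := by exact_mod_cast ne_of_gt hy
  have hz := zre_pos hs hy
  have hZ := hasDerivAt_Z s hy
  have he : HasDerivAt (fun y' : ℝ => Complex.exp (s/(y':ℂ)))
      (Complex.exp (s/(y:ℂ)) * -(s/(y:ℂ)^2)) y := hZ.cexp
  have hk0 : HasDerivAt (fun y' : ℝ => KI 0 (s/(y':ℂ)))
      (-(s/(y:ℂ)^2) • -(KI 1 (s/(y:ℂ)))) y := by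
      have := (hasDerivAt_KI 0 _ hz).scomp y hZ; exact this
  have hk1 : HasDerivAt (fun y' : ℝ => KI 1 (s/(y':ℂ)))
      (-(s/(y:ℂ)^2) • -(KI 2 (s/(y:ℂ)))) y := by
      have := (hasDerivAt_KI 1 _ hz).scomp y hZ; exact this
  have hid : HasDerivAt (fun y' : ℝ => ((y':ℝ):ℂ)) 1 y := (hasDerivAt_id (y:ℂ)).comp_ofReal
  have hc : HasDerivAt (fun y' : ℝ => (-(y':ℂ)/2 - s)) (-(1:ℂ)/2) y := by
    have := (hid.neg.div_const 2).sub_const s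
    refine this.congr_deriv ?_; ring
  have hB : HasDerivAt (fun y' : ℝ =>
      (-(y':ℂ)/2 - s) * KI 0 (s/(y':ℂ)) + s * KI 1 (s/(y':ℂ)))
      ((-(1:ℂ)/2) * KI 0 (s/(y:ℂ)) + (-(y:ℂ)/2 - s) * (-(s/(y:ℂ)^2) • -(KI 1 (s/(y:ℂ))))
        + s * (-(s/(y:ℂ)^2) • -(KI 2 (s/(y:ℂ))))) y := by
    have := (hc.mul hk0).add (hk1.const_mul s)
    refine this.congr_deriv ?_; ring
  have h := ((hasDerivAt_P hy).mul he).mul hB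
  refine h.congr_deriv ?_
  unfold DG
  simp only [smul_eq_mul, Pi.mul_apply]
  field_simp
  ring

end OG

/-- For `Re s > 0`, the outgoing solution `v_out(y) = y^(-1/2) e^(s/y) K₂(s/y)` solves
the vacuum eigenvalue equation `2s v' + (y² v')' - (15/4) v = 0` on `(0, ∞)`. -/
theorem outgoing_solution_vacuum (s : ℂ) (hs : 0 < s.re) :
    let vout : ℝ → ℂ := fun y =>
      (y : ℂ) ^ (-(1:ℂ)/2) * Complex.exp (s / (y : ℂ)) * besselK2 (s / (y : ℂ))
    ∀ y : ℝ, 0 < y →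
      2 * s * deriv vout y + deriv (fun y' : ℝ => (y' : ℂ) ^ 2 * deriv vout y') y
        - (15/4) * vout y = 0 := by
  intro vout y hy
  have hy0 : (y:ℂ) ≠ 0 := by exact_mod_cast ne_of_gt hy
  have hvout : vout = fun y' : ℝ => OG.P y' * Complex.exp (s/(y':ℂ)) * OG.KI 0 (s/(y':ℂ)) := by
    funext y'; simp only [vout, OG.besselK2_eq, OG.P]
  have hD1 : ∀ u : ℝ, 0 < u → deriv vout u = OG.Ef s u := by
    intro u hu
    rw [hvout]; exact (OG.hasDerivAt_vout hs hu).deriv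
  have hEq : (fun y' : ℝ => (y':ℂ)^2 * deriv vout y') =ᶠ[nhds y] OG.G s := by
    filter_upwards [isOpen_Ioi.mem_nhds (show y ∈ Ioi (0:ℝ) from hy)] with u hu
    rw [hD1 u hu, OG.sq_Ef_eq hu]
  rw [hD1 y hy, hEq.deriv_eq, (OG.hasDerivAt_G hs hy).deriv]
  have hODE := OG.bessel_ode (s/(y:ℂ)) (OG.zre_pos hs hy)
  have hvy : vout y = OG.P y * Complex.exp (s/(y:ℂ)) * OG.KI 0 (s/(y:ℂ)) := by rw [hvout]
  rw [hvy]
  unfold OG.Ef OG.DG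
  have hw : (y:ℂ) * ((y:ℂ))⁻¹ = 1 := mul_inv_cancel₀ hy0
  simp only [div_eq_mul_inv, mul_inv, ← inv_pow] at hODE ⊢
  linear_combination (OG.P y * Complex.exp (s * ((y:ℂ))⁻¹)) * hODE
    + ((-1/2) * OG.P y * Complex.exp (s * ((y:ℂ))⁻¹) * OG.KI 1 (s * ((y:ℂ))⁻¹) * s * ((y:ℂ))⁻¹
       + (1/4) * OG.P y * Complex.exp (s * ((y:ℂ))⁻¹) * OG.KI 0 (s * ((y:ℂ))⁻¹)
       + (1/2) * OG.P y * Complex.exp (s * ((y:ℂ))⁻¹) * OG.KI 0 (s * ((y:ℂ))⁻¹) * s * ((y:ℂ))⁻¹) * hw
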